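/- Error estimate for the WKB approximation: for all A ∈ ℂ, ω ∈ ℝ and s ∈ {1, −1}, the function x ↦ √(ξ(x + 1/2)) · (d³/dx³)(A·exp(i·ω·χ(x)) − s·(conj A)·exp(−i·ω·χ(x))) is O(x^(−5/2)) as x → ∞ (the third derivative taken on the interval (−1/2, ∞), where χ is smooth). -/

import Mathlib

/-- ξ(y) = √(y² + 1/16). -/
noncomputable def xi (y : ℝ) : ℝ := Real.sqrt (y ^ 2 + 1 / 16)

/-- χ(x) = log(2·√(4x² + 4x + 1) + √(16x² + 16x + 5)). -/
noncomputable def chi (x : ℝ) : ℝ :=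
  Real.log (2 * Real.sqrt (4 * x ^ 2 + 4 * x + 1) + Real.sqrt (16 * x ^ 2 + 16 * x + 5))
noncomputable def chi1 (x : ℝ) : ℝ := 4 / Real.sqrt (16 * x ^ 2 + 16 * x + 5)
noncomputable def chi2 (x : ℝ) : ℝ :=
  -(64 * x + 32) / (Real.sqrt (16 * x ^ 2 + 16 * x + 5)) ^ 3
noncomputable def chi3 (x : ℝ) : ℝ :=
  -64 / (Real.sqrt (16 * x ^ 2 + 16 * x + 5)) ^ 3
    + 3 * (32 * x + 16) ^ 2 / (Real.sqrt (16 * x ^ 2 + 16 * x + 5)) ^ 5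

lemma w_pos (x : ℝ) : 0 < 16 * x ^ 2 + 16 * x + 5 := by nlinarith [sq_nonneg (4 * x + 2)]

lemma sqrtw_pos (x : ℝ) : 0 < Real.sqrt (16 * x ^ 2 + 16 * x + 5) :=
  Real.sqrt_pos.2 (w_pos x)

lemma hasDerivAt_w (x : ℝ) :
    HasDerivAt (fun x : ℝ => 16 * x ^ 2 + 16 * x + 5) (32 * x + 16) x := by
  have h := (((hasDerivAt_pow 2 x).const_mul 16).add ((hasDerivAt_id x).const_mul 16)).add_const 5
  refine h.congr_deriv (Eq.symm ?_)
  push_cast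
  ring

lemma hasDerivAt_sqrtw (x : ℝ) :
    HasDerivAt (fun x : ℝ => Real.sqrt (16 * x ^ 2 + 16 * x + 5))
      ((32 * x + 16) / (2 * Real.sqrt (16 * x ^ 2 + 16 * x + 5))) x :=
  (hasDerivAt_w x).sqrt (ne_of_gt (w_pos x))

lemma hasDerivAt_chi1 (x : ℝ) : HasDerivAt chi1 (chi2 x) x := by
  have h := (hasDerivAt_const x (4:ℝ)).div (hasDerivAt_sqrtw x) (ne_of_gt (sqrtw_pos x))
  refine h.congr_deriv (Eq.symm ?_)
  have hs := sqrtw_pos x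
  unfold chi2
  field_simp
  ring

lemma hasDerivAt_chi2 (x : ℝ) : HasDerivAt chi2 (chi3 x) x := by
  have hnum : HasDerivAt (fun x : ℝ => -(64 * x + 32)) (-64) x := by
    have h := ((hasDerivAt_id x).const_mul (64:ℝ)).add_const (32:ℝ)
    exact h.fun_neg.congr_deriv (by norm_num)
  have hden : HasDerivAt (fun x : ℝ => (Real.sqrt (16 * x ^ 2 + 16 * x + 5)) ^ 3)
      (3 * (Real.sqrt (16 * x ^ 2 + 16 * x + 5)) ^ 2 *
        ((32 * x + 16) / (2 * Real.sqrt (16 * x ^ 2 + 16 * x + 5)))) x := by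
    have h := (hasDerivAt_sqrtw x).pow 3
    exact h.congr_deriv (by norm_num)
  have hne : (Real.sqrt (16 * x ^ 2 + 16 * x + 5)) ^ 3 ≠ 0 :=
    pow_ne_zero 3 (ne_of_gt (sqrtw_pos x))
  have h := hnum.div hden hne
  refine h.congr_deriv (Eq.symm ?_)
  have hs := sqrtw_pos x
  unfold chi3
  field_simp
  ring

lemma hasDerivAt_chi {x : ℝ} (hx : -(1/2 : ℝ) < x) : HasDerivAt chi (chi1 x) x := by
  have h1 : (0:ℝ) < 2 * x + 1 := by linarith
  have hq1 : HasDerivAt (fun x : ℝ => 4 * x ^ 2 + 4 * x + 1) (8 * x + 4) x := by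
    have h := (((hasDerivAt_pow 2 x).const_mul 4).add ((hasDerivAt_id x).const_mul 4)).add_const 1
    refine h.congr_deriv (Eq.symm ?_)
    push_cast
    ring
  have hq1pos : (0:ℝ) < 4 * x ^ 2 + 4 * x + 1 := by nlinarith
  have hsq1 : Real.sqrt (4 * x ^ 2 + 4 * x + 1) = 2 * x + 1 := by
    rw [show (4 * x ^ 2 + 4 * x + 1 : ℝ) = (2 * x + 1) ^ 2 by ring, Real.sqrt_sq h1.le]
  have hs1 : HasDerivAt (fun x : ℝ => Real.sqrt (4 * x ^ 2 + 4 * x + 1))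
      ((8 * x + 4) / (2 * Real.sqrt (4 * x ^ 2 + 4 * x + 1))) x :=
    hq1.sqrt (ne_of_gt hq1pos)
  have hv : HasDerivAt (fun x : ℝ => 2 * Real.sqrt (4 * x ^ 2 + 4 * x + 1) +
      Real.sqrt (16 * x ^ 2 + 16 * x + 5))
      (2 * ((8 * x + 4) / (2 * Real.sqrt (4 * x ^ 2 + 4 * x + 1))) +
        (32 * x + 16) / (2 * Real.sqrt (16 * x ^ 2 + 16 * x + 5))) x :=
    (hs1.const_mul 2).add (hasDerivAt_sqrtw x)
  have hvpos : 0 < 2 * Real.sqrt (4 * x ^ 2 + 4 * x + 1) +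
      Real.sqrt (16 * x ^ 2 + 16 * x + 5) := by
    have := sqrtw_pos x; rw [hsq1]; linarith
  have h := hv.log (ne_of_gt hvpos)
  refine h.congr_deriv (Eq.symm ?_)
  have hs := sqrtw_pos x
  rw [hsq1]
  unfold chi1
  rw [div_eq_div_iff (ne_of_gt hs) (by positivity)]
  have hs2 : Real.sqrt (16 * x ^ 2 + 16 * x + 5) ^ 2 = 16 * x ^ 2 + 16 * x + 5 :=
    Real.sq_sqrt (w_pos x).le
  field_simp
  have hs' : Real.sqrt (x * 16 * (x + 1) + 5) ≠ 0 := by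
    rw [show x * 16 * (x + 1) + 5 = 16 * x ^ 2 + 16 * x + 5 by ring]; exact ne_of_gt hs
  field_simp
  nlinarith [hs2]

noncomputable def Pc (c : ℂ) (x : ℝ) : ℂ :=
  c * chi3 x + 3 * c ^ 2 * chi1 x * chi2 x + c ^ 3 * (chi1 x : ℂ) ^ 3

lemma hasDerivAt_E (c : ℂ) {x : ℝ} (hx : -(1/2 : ℝ) < x) :
    HasDerivAt (fun t : ℝ => Complex.exp (c * chi t))
      (c * chi1 x * Complex.exp (c * chi x)) x := by
  have h := (((hasDerivAt_chi hx).ofReal_comp).const_mul c).cexp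
  convert h using 1; ring

lemma hasDerivAt_g1 (c : ℂ) {x : ℝ} (hx : -(1/2 : ℝ) < x) :
    HasDerivAt (fun t : ℝ => c * chi1 t * Complex.exp (c * chi t))
      ((c * chi2 x + c ^ 2 * (chi1 x : ℂ) ^ 2) * Complex.exp (c * chi x)) x := by
  have h := (((hasDerivAt_chi1 x).ofReal_comp).const_mul c).mul (hasDerivAt_E c hx)
  refine h.congr_deriv (Eq.symm ?_); ring

lemma hasDerivAt_g2 (c : ℂ) {x : ℝ} (hx : -(1/2 : ℝ) < x) :
    HasDerivAt (fun t : ℝ => (c * chi2 t + c ^ 2 * (chi1 t : ℂ) ^ 2) * Complex.exp (c * chi t))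
      (Pc c x * Complex.exp (c * chi x)) x := by
  have hcoef : HasDerivAt (fun t : ℝ => c * chi2 t + c ^ 2 * (chi1 t : ℂ) ^ 2)
      (c * chi3 x + c ^ 2 * (2 * (chi1 x : ℂ) * chi2 x)) x := by
    have h1 := ((hasDerivAt_chi2 x).ofReal_comp).const_mul c
    have e := (hasDerivAt_chi1 x).ofReal_comp
    have h2 : HasDerivAt (fun t : ℝ => c ^ 2 * (chi1 t : ℂ) ^ 2)
        (c ^ 2 * ((chi2 x : ℂ) * chi1 x + (chi1 x : ℂ) * chi2 x)) x := by
      have h2' := (e.mul e).const_mul (c ^ 2)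
      simp only [← pow_two] at h2'
      exact h2'
    have h := h1.add h2
    refine h.congr_deriv (Eq.symm ?_)
    push_cast; ring
  have h := hcoef.mul (hasDerivAt_E c hx)
  refine h.congr_deriv (Eq.symm ?_)
  unfold Pc; push_cast; ring

lemma iteratedDeriv3_eq (B C c1 c2 : ℂ) {x : ℝ} (hx : -(1/2 : ℝ) < x) :
    iteratedDeriv 3 (fun t : ℝ => B * Complex.exp (c1 * chi t) + C * Complex.exp (c2 * chi t)) x
      = B * (Pc c1 x * Complex.exp (c1 * chi x)) + C * (Pc c2 x * Complex.exp (c2 * chi x)) := by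
  set U : ℝ → ℂ := fun t => B * Complex.exp (c1 * chi t) + C * Complex.exp (c2 * chi t) with hU
  set U1 : ℝ → ℂ := fun t => B * (c1 * chi1 t * Complex.exp (c1 * chi t))
      + C * (c2 * chi1 t * Complex.exp (c2 * chi t)) with hU1
  set U2 : ℝ → ℂ := fun t => B * ((c1 * chi2 t + c1 ^ 2 * (chi1 t : ℂ) ^ 2) * Complex.exp (c1 * chi t))
      + C * ((c2 * chi2 t + c2 ^ 2 * (chi1 t : ℂ) ^ 2) * Complex.exp (c2 * chi t)) with hU2
  have step0 : ∀ y, -(1/2 : ℝ) < y → HasDerivAt U (U1 y) y := fun y hy =>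
    ((hasDerivAt_E c1 hy).const_mul B).add ((hasDerivAt_E c2 hy).const_mul C)
  have step1 : ∀ y, -(1/2 : ℝ) < y → HasDerivAt U1 (U2 y) y := fun y hy =>
    ((hasDerivAt_g1 c1 hy).const_mul B).add ((hasDerivAt_g1 c2 hy).const_mul C)
  have step2 : ∀ y, -(1/2 : ℝ) < y → HasDerivAt U2
      (B * (Pc c1 y * Complex.exp (c1 * chi y)) + C * (Pc c2 y * Complex.exp (c2 * chi y))) y :=
    fun y hy => ((hasDerivAt_g2 c1 hy).const_mul B).add ((hasDerivAt_g2 c2 hy).const_mul C)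
  have hmem : ∀ {y : ℝ}, -(1/2 : ℝ) < y → Set.Ioi (-(1/2 : ℝ)) ∈ nhds y := fun hy =>
    isOpen_Ioi.mem_nhds hy
  have d1 : ∀ y, -(1/2 : ℝ) < y → deriv U y = U1 y := fun y hy => (step0 y hy).deriv
  have d2 : ∀ y, -(1/2 : ℝ) < y → deriv (deriv U) y = U2 y := by
    intro y hy
    have h : deriv U =ᶠ[nhds y] U1 :=
      Filter.eventuallyEq_of_mem (hmem hy) (fun z hz => d1 z hz)
    rw [h.deriv_eq]
    exact (step1 y hy).deriv
  have d3 : deriv (deriv (deriv U)) x =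
      B * (Pc c1 x * Complex.exp (c1 * chi x)) + C * (Pc c2 x * Complex.exp (c2 * chi x)) := by
    have h : deriv (deriv U) =ᶠ[nhds x] U2 :=
      Filter.eventuallyEq_of_mem (hmem hx) (fun z hz => d2 z hz)
    rw [h.deriv_eq]
    exact (step2 x hx).deriv
  rw [show (3:ℕ) = 2 + 1 from rfl, iteratedDeriv_succ, iteratedDeriv_succ, iteratedDeriv_succ,
    iteratedDeriv_zero]
  exact d3

lemma sqrtw_ge {x : ℝ} (hx : 1 ≤ x) : 4 * x ≤ Real.sqrt (16 * x ^ 2 + 16 * x + 5) := by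
  have h0 : (0:ℝ) < 4 * x := by linarith
  rw [show (4:ℝ) * x = Real.sqrt ((4*x)^2) from (Real.sqrt_sq h0.le).symm]
  exact Real.sqrt_le_sqrt (by nlinarith)

lemma sqrtw_le {x : ℝ} (hx : 1 ≤ x) : Real.sqrt (16 * x ^ 2 + 16 * x + 5) ≤ 16 * x := by
  have h : Real.sqrt (16 * x ^ 2 + 16 * x + 5) ≤ Real.sqrt ((16*x)^2) :=
    Real.sqrt_le_sqrt (by nlinarith)
  rwa [Real.sqrt_sq (by linarith)] at h

lemma chi1_bound {x : ℝ} (hx : 1 ≤ x) : |chi1 x| ≤ 1 / x := by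
  have hs := sqrtw_pos x
  have hx0 : (0:ℝ) < x := by linarith
  rw [chi1, abs_of_pos (by positivity), div_le_div_iff₀ hs hx0]
  have := sqrtw_ge hx
  linarith

lemma chi2_bound {x : ℝ} (hx : 1 ≤ x) : |chi2 x| ≤ 2 / x ^ 2 := by
  have hs := sqrtw_pos x
  have hx0 : (0:ℝ) < x := by linarith
  have h4 := sqrtw_ge hx
  have h3 : (4*x)^3 ≤ Real.sqrt (16 * x ^ 2 + 16 * x + 5) ^ 3 :=
    pow_le_pow_left₀ (by positivity) h4 3
  rw [chi2, abs_div, abs_neg, abs_of_pos (by linarith), abs_of_pos (by positivity),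
    div_le_div_iff₀ (by positivity) (by positivity)]
  nlinarith

lemma chi3_bound {x : ℝ} (hx : 1 ≤ x) : |chi3 x| ≤ 8 / x ^ 3 := by
  have hs := sqrtw_pos x
  have hx0 : (0:ℝ) < x := by linarith
  have h4 := sqrtw_ge hx
  have h3 : (4*x)^3 ≤ Real.sqrt (16 * x ^ 2 + 16 * x + 5) ^ 3 :=
    pow_le_pow_left₀ (by positivity) h4 3
  have h5 : (4*x)^5 ≤ Real.sqrt (16 * x ^ 2 + 16 * x + 5) ^ 5 :=
    pow_le_pow_left₀ (by positivity) h4 5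
  rw [chi3]
  refine (abs_add_le _ _).trans ?_
  have e1 : |(-64:ℝ) / Real.sqrt (16 * x ^ 2 + 16 * x + 5) ^ 3| ≤ 1 / x ^ 3 := by
    rw [abs_div, abs_neg, abs_of_pos (by norm_num : (0:ℝ) < 64), abs_of_pos (by positivity),
      div_le_div_iff₀ (by positivity) (by positivity)]
    nlinarith
  have e2 : |3 * (32 * x + 16) ^ 2 / Real.sqrt (16 * x ^ 2 + 16 * x + 5) ^ 5| ≤ 7 / x ^ 3 := by
    rw [abs_div, abs_of_pos (by positivity), abs_of_pos (by positivity),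
      div_le_div_iff₀ (by positivity) (by positivity)]
    have ha : x ^ 3 ≤ x ^ 5 := pow_le_pow_right₀ hx (by norm_num)
    have hb : x ^ 4 ≤ x ^ 5 := pow_le_pow_right₀ hx (by norm_num)
    nlinarith [h5, ha, hb]
  have : (1:ℝ)/x^3 + 7/x^3 = 8/x^3 := by ring
  linarith [e1, e2]

lemma sqrtxi_bound {x : ℝ} (hx : 1 ≤ x) : Real.sqrt (xi (x + 1/2)) ≤ 2 * Real.sqrt x := by
  have hx0 : (0:ℝ) < x := by linarith
  have hxi : xi (x + 1/2) = Real.sqrt (16 * x ^ 2 + 16 * x + 5) / 4 := by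
    rw [xi, show ((x + 1/2) ^ 2 + 1/16 : ℝ) = (16 * x ^ 2 + 16 * x + 5) / 16 by ring,
      Real.sqrt_div (w_pos x).le, show (16:ℝ) = 4 ^ 2 by norm_num,
      Real.sqrt_sq (by norm_num : (0:ℝ) ≤ 4)]
  rw [hxi]
  have h2 : Real.sqrt (16 * x ^ 2 + 16 * x + 5) / 4 ≤ 4 * x := by
    have := sqrtw_le hx; linarith
  calc Real.sqrt (Real.sqrt (16 * x ^ 2 + 16 * x + 5) / 4) ≤ Real.sqrt (4 * x) :=
        Real.sqrt_le_sqrt h2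
    _ = 2 * Real.sqrt x := by
        rw [show (4:ℝ) * x = 2 ^ 2 * x by norm_num, Real.sqrt_mul (by positivity),
          Real.sqrt_sq (by norm_num : (0:ℝ) ≤ 2)]

lemma Pc_bound (c : ℂ) {x : ℝ} (hx : 1 ≤ x) :
    ‖Pc c x‖ ≤ (8 * ‖c‖ + 6 * ‖c‖ ^ 2 + ‖c‖ ^ 3) / x ^ 3 := by
  have hx0 : (0:ℝ) < x := by linarith
  have h1 := chi1_bound hx
  have h2 := chi2_bound hx
  have h3 := chi3_bound hx
  calc ‖Pc c x‖ ≤ ‖c‖ * |chi3 x| + 3 * ‖c‖ ^ 2 * (|chi1 x| * |chi2 x|) + ‖c‖ ^ 3 * |chi1 x| ^ 3 := by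
        rw [Pc]
        refine norm_add₃_le.trans (le_of_eq ?_)
        simp only [norm_mul, norm_pow, Complex.norm_real, Real.norm_eq_abs, Complex.norm_ofNat]
        ring
    _ ≤ ‖c‖ * (8 / x ^ 3) + 3 * ‖c‖ ^ 2 * ((1 / x) * (2 / x ^ 2)) + ‖c‖ ^ 3 * (1 / x) ^ 3 := by
        gcongr
    _ = (8 * ‖c‖ + 6 * ‖c‖ ^ 2 + ‖c‖ ^ 3) / x ^ 3 := by
        field_simp
        ring

/-- Error estimate for the WKB approximation: for s = ±1 the function
x ↦ √(ξ(x+1/2)) · u_s'''(x), with u_s(x) = A·exp(i·ω·χ(x)) − s·(conj A)·exp(−i·ω·χ(x)),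
is O(x^(−5/2)) as x → ∞. -/
theorem wkb_error_isBigO (A : ℂ) (ω s : ℝ) (hs : s = 1 ∨ s = -1) :
    Asymptotics.IsBigO Filter.atTop
      (fun x : ℝ => (Real.sqrt (xi (x + 1/2)) : ℂ) *
        iteratedDeriv 3 (fun t : ℝ =>
          A * Complex.exp (Complex.I * ω * chi t) -
            (s : ℂ) * (starRingEnd ℂ) A * Complex.exp (-(Complex.I * ω * chi t))) x)
      (fun x : ℝ => x ^ (-(5 : ℝ)/2)) := by
  have hs1 : |s| = 1 := by rcases hs with h | h <;> simp [h]
  set c1 : ℂ := Complex.I * (ω : ℂ) with hc1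
  set c2 : ℂ := -(Complex.I * (ω : ℂ)) with hc2
  have hnc1 : ‖c1‖ = |ω| := by simp [hc1]
  have hnc2 : ‖c2‖ = |ω| := by simp [hc2]
  set D : ℝ := 8 * |ω| + 6 * |ω| ^ 2 + |ω| ^ 3 with hD
  have hD0 : 0 ≤ D := by positivity
  have hfun : (fun t : ℝ =>
      A * Complex.exp (Complex.I * ω * chi t) -
        (s : ℂ) * (starRingEnd ℂ) A * Complex.exp (-(Complex.I * ω * chi t)))
      = (fun t : ℝ => A * Complex.exp (c1 * chi t)
          + (-((s : ℂ) * (starRingEnd ℂ) A)) * Complex.exp (c2 * chi t)) := by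
    funext t
    rw [hc1, hc2, neg_mul]
    ring
  rw [Asymptotics.isBigO_iff]
  refine ⟨4 * ‖A‖ * D, ?_⟩
  filter_upwards [Filter.eventually_ge_atTop 1] with x hx
  have hx0 : (0:ℝ) < x := by linarith
  have hxh : -(1/2 : ℝ) < x := by linarith
  rw [hfun, iteratedDeriv3_eq A (-((s : ℂ) * (starRingEnd ℂ) A)) c1 c2 hxh]
  have he1 : ‖Complex.exp (c1 * chi x)‖ = 1 := by
    rw [Complex.norm_exp]
    simp [hc1, Complex.mul_re]
  have he2 : ‖Complex.exp (c2 * chi x)‖ = 1 := by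
    rw [Complex.norm_exp]
    simp [hc2, Complex.mul_re]
  have hP1 : ‖Pc c1 x‖ ≤ D / x ^ 3 := by rw [hD, ← hnc1]; exact Pc_bound c1 hx
  have hP2 : ‖Pc c2 x‖ ≤ D / x ^ 3 := by rw [hD, ← hnc2]; exact Pc_bound c2 hx
  have hn : ‖A * (Pc c1 x * Complex.exp (c1 * chi x))
      + (-((s : ℂ) * (starRingEnd ℂ) A)) * (Pc c2 x * Complex.exp (c2 * chi x))‖
      ≤ ‖A‖ * (D / x ^ 3) + ‖A‖ * (D / x ^ 3) := by
    refine (norm_add_le _ _).trans ?_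
    have hA1 : ‖A * (Pc c1 x * Complex.exp (c1 * chi x))‖ ≤ ‖A‖ * (D / x ^ 3) := by
      rw [norm_mul, norm_mul, he1, mul_one]
      exact mul_le_mul_of_nonneg_left hP1 (norm_nonneg A)
    have hA2 : ‖(-((s : ℂ) * (starRingEnd ℂ) A)) * (Pc c2 x * Complex.exp (c2 * chi x))‖
        ≤ ‖A‖ * (D / x ^ 3) := by
      rw [norm_mul, norm_mul, he2, mul_one, norm_neg, norm_mul, Complex.norm_real,
        Real.norm_eq_abs, hs1, one_mul, RCLike.norm_conj]
      exact mul_le_mul_of_nonneg_left hP2 (norm_nonneg A)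
    linarith
  have hsx := sqrtxi_bound hx
  have hr : x ^ (-(5:ℝ)/2) = Real.sqrt x / x ^ 3 := by
    rw [Real.sqrt_eq_rpow, show (-(5:ℝ)/2) = 1/2 + (-(3:ℝ)) by norm_num, Real.rpow_add hx0,
      Real.rpow_neg hx0.le, show ((3:ℝ)) = ((3:ℕ):ℝ) by norm_num, Real.rpow_natCast]
    ring
  calc ‖(Real.sqrt (xi (x + 1/2)) : ℂ) * (A * (Pc c1 x * Complex.exp (c1 * chi x))
        + (-((s : ℂ) * (starRingEnd ℂ) A)) * (Pc c2 x * Complex.exp (c2 * chi x)))‖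
      = Real.sqrt (xi (x + 1/2)) * ‖A * (Pc c1 x * Complex.exp (c1 * chi x))
        + (-((s : ℂ) * (starRingEnd ℂ) A)) * (Pc c2 x * Complex.exp (c2 * chi x))‖ := by
        rw [norm_mul, Complex.norm_real, Real.norm_eq_abs,
          abs_of_nonneg (Real.sqrt_nonneg _)]
    _ ≤ (2 * Real.sqrt x) * (‖A‖ * (D / x ^ 3) + ‖A‖ * (D / x ^ 3)) := by
        refine mul_le_mul hsx hn (norm_nonneg _) (by positivity)
    _ = (4 * ‖A‖ * D) * (Real.sqrt x / x ^ 3) := by ring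
    _ ≤ (4 * ‖A‖ * D) * ‖x ^ (-(5:ℝ)/2)‖ := by
        rw [Real.norm_eq_abs, abs_of_nonneg (Real.rpow_nonneg hx0.le _), hr]
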